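/- Let (P, ⪯, ∧) be a meet semilattice. If f : P → ℝ and g : P → ℝ are positive definite, then the pointwise product f·g is positive definite. -/

import Mathlib

open scoped MatrixOrder in
lemma matrix_exists_conjTranspose_mul_self {n : Type*} [Fintype n] {N : Matrix n n ℝ}
    (hN : N.PosSemidef) : ∃ B : Matrix n n ℝ, N = Matrix.conjTranspose B * B := by
  classical
  obtain ⟨X, hX, -, hNX⟩ := CFC.exists_sqrt_of_isSelfAdjoint_of_quasispectrumRestricts
    hN.isHermitian (QuasispectrumRestricts.nnreal_of_nonneg hN.nonneg)
  refine ⟨X, ?_⟩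
  have h := hX.star_eq
  rw [Matrix.star_eq_conjTranspose] at h
  rw [h]
  simpa using hNX.symm

/-- **Schur product theorem** (real case): the entrywise product of two positive
semidefinite matrices is positive semidefinite. -/
lemma schur_product_posSemidef {n : Type*} [Fintype n]
    {M N : Matrix n n ℝ} (hM : M.PosSemidef) (hN : N.PosSemidef) :
    (Matrix.of fun i j => M i j * N i j).PosSemidef := by
  obtain ⟨B, hB⟩ := matrix_exists_conjTranspose_mul_self hN
  rw [Matrix.posSemidef_iff_dotProduct_mulVec]
  constructor
  · ext i j
    simp only [Matrix.conjTranspose_apply, Matrix.of_apply, star_trivial]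
    have hm := hM.1.apply i j
    have hn := hN.1.apply i j
    simp only [star_trivial] at hm hn
    rw [← hm, ← hn]
  · intro x
    have key : ∀ i j, N i j = ∑ k, B k i * B k j := by
      intro i j
      rw [hB]
      simp [Matrix.mul_apply, Matrix.conjTranspose_apply]
    have : dotProduct (star x) (Matrix.mulVec (Matrix.of fun i j => M i j * N i j) x)
        = ∑ k, dotProduct (star (fun i => B k i * x i))
            (Matrix.mulVec M (fun i => B k i * x i)) := by
      simp only [dotProduct, Matrix.mulVec, dotProduct, Matrix.of_apply,
        star_trivial, Pi.star_apply, key, Finset.mul_sum, Finset.sum_mul]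
      conv_lhs => enter [2]; ext i; rw [Finset.sum_comm]
      rw [Finset.sum_comm]
      refine Finset.sum_congr rfl fun k _ => ?_
      refine Finset.sum_congr rfl fun i _ => Finset.sum_congr rfl fun j _ => ?_
      ring
    rw [this]
    exact Finset.sum_nonneg fun k _ => hM.dotProduct_mulVec_nonneg _

/-- A function `f : P → ℝ` on a meet semilattice is *positive definite* if for every
finite nonempty subset `S ⊆ P` the meet matrix `(S)_f`, with entries `f (x ⊓ y)` for
`x, y ∈ S`, is positive semidefinite. -/
def IsPosDefOnMeets {P : Type*} [SemilatticeInf P] (f : P → ℝ) : Prop :=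
  ∀ S : Finset P, S.Nonempty →
    (Matrix.of fun x y : S => f (x.1 ⊓ y.1)).PosSemidef

/-- If `f` and `g` are positive definite on a meet semilattice, then
the pointwise product `f·g` is positive definite. -/
theorem posDef_mul {P : Type*} [SemilatticeInf P] (f g : P → ℝ)
    (hf : IsPosDefOnMeets f) (hg : IsPosDefOnMeets g) :
    IsPosDefOnMeets (fun x => f x * g x) := by
  intro S hS
  exact schur_product_posSemidef (hf S hS) (hg S hS)
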